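/- Let A : [0,∞) → L(ℝ^m, ℝ^m) be continuous with ‖A(τ)‖ ≤ K·(q + ½vτ)^{-2-α} for constants K, q, v > 0 and α > 0. Then the operator Q on the Banach space (Ĉ, ‖·‖_λ) with λ = v/(2q), defined by (Qw)(t) = ∫_0^t ∫_0^s A(τ) w(τ) dτ ds, is bounded with operator norm ‖Q‖_λ ≤ 4(1 + 1/α)·K/(v² q^α). -/

import Mathlib

open MeasureTheory

private lemma aux_int (lam α s : ℝ) (hlam : 0 < lam) (hα : 0 < α) (hs : 0 ≤ s) :
    ∫ τ in (0:ℝ)..s, (1 + lam * τ) ^ (-1 - α) ≤ 1 / (lam * α) := by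
  have hpos : ∀ τ ∈ Set.uIcc (0:ℝ) s, 0 < 1 + lam * τ := by
    intro τ hτ
    rw [Set.uIcc_of_le hs] at hτ
    nlinarith [hτ.1]
  have hcont : ContinuousOn (fun τ : ℝ => (1 + lam * τ) ^ (-1 - α)) (Set.uIcc 0 s) := by
    apply ContinuousOn.rpow_const
    · exact (continuous_const.add (continuous_const.mul continuous_id)).continuousOn
    · intro τ hτ; exact Or.inl (hpos τ hτ).ne'
  have hint : IntervalIntegrable (fun τ : ℝ => (1 + lam * τ) ^ (-1 - α)) volume 0 s :=
    hcont.intervalIntegrable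
  have hderiv : ∀ τ ∈ Set.uIcc (0:ℝ) s,
      HasDerivAt (fun τ : ℝ => -(1 + lam * τ) ^ (-α) / (lam * α))
        ((1 + lam * τ) ^ (-1 - α)) τ := by
    intro τ hτ
    have h1 : HasDerivAt (fun τ : ℝ => 1 + lam * τ) lam τ := by
      simpa using ((hasDerivAt_id τ).const_mul lam).const_add 1
    have h2 : HasDerivAt (fun x : ℝ => x ^ (-α))
        ((-α) * (1 + lam * τ) ^ (-α - 1)) (1 + lam * τ) :=
      Real.hasDerivAt_rpow_const (Or.inl (hpos τ hτ).ne')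
    have h3 := (h2.comp τ h1).neg.div_const (lam * α)
    refine h3.congr_deriv ?_
    have : (-α - 1) = (-1 - α) := by ring
    rw [this]
    field_simp
  rw [intervalIntegral.integral_eq_sub_of_hasDerivAt hderiv hint]
  have h0 : (1 + lam * (0:ℝ)) ^ (-α) = 1 := by norm_num
  have hnn : 0 ≤ (1 + lam * s) ^ (-α) := Real.rpow_nonneg (by nlinarith) _
  rw [h0]
  have hla : 0 < lam * α := mul_pos hlam hα
  have heq : -(1 + lam * s) ^ (-α) / (lam * α) - -1 / (lam * α)
      = (1 - (1 + lam * s) ^ (-α)) / (lam * α) := by ring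
  rw [heq]
  gcongr
  linarith

/-- Operator norm bound for `(Qw)(t) = ∫_0^t ∫_0^s A(τ)w(τ) dτ ds` on the weighted
space with weight `⟨λt⟩`, `λ = v/(2q)`: if `‖A(τ)‖ ≤ K(q + ½vτ)^{-2-α}` then
`‖Q‖_λ ≤ 4(1 + 1/α)K/(v²q^α)`. -/
theorem double_integral_operator_norm_bound (m : ℕ)
    (A : ℝ → (EuclideanSpace ℝ (Fin m) →L[ℝ] EuclideanSpace ℝ (Fin m)))
    (hA : Continuous A)
    (K q v α : ℝ) (hK : 0 < K) (hq : 0 < q) (hv : 0 < v) (hα : 0 < α)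
    (hAbound : ∀ τ ≥ (0:ℝ), ‖A τ‖ ≤ K * (q + v / 2 * τ) ^ (-2 - α))
    (w : ℝ → EuclideanSpace ℝ (Fin m)) (hw : Continuous w)
    (B : ℝ) (hB : 0 ≤ B)
    (hwB : ∀ t ≥ (0:ℝ), ‖w t‖ ≤ B * Real.sqrt (1 + (v / (2 * q) * t) ^ 2)) :
    ∀ t ≥ (0:ℝ),
      ‖∫ s in (0:ℝ)..t, ∫ τ in (0:ℝ)..s, A τ (w τ)‖ ≤
        4 * (1 + 1 / α) * K / (v ^ 2 * q ^ α) * B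
          * Real.sqrt (1 + (v / (2 * q) * t) ^ 2) := by
  intro t ht
  set lam := v / (2 * q) with hlam
  have hlam_pos : 0 < lam := by positivity
  set c : ℝ := K * B * q ^ (-2 - α) with hc
  have hc_nn : 0 ≤ c := by positivity
  set C : ℝ := c / (lam * α) with hC
  have hC_nn : 0 ≤ C := by positivity
  -- pointwise bound on the integrand
  have hpt : ∀ τ ≥ (0:ℝ), ‖A τ (w τ)‖ ≤ c * (1 + lam * τ) ^ (-1 - α) := by
    intro τ hτ
    have h1 : 0 < 1 + lam * τ := by nlinarith [mul_nonneg hlam_pos.le hτ]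
    have hfac : q + v / 2 * τ = q * (1 + lam * τ) := by
      field_simp [hlam]
      rw [hlam]
      field_simp
    have hsqrt : Real.sqrt (1 + (lam * τ) ^ 2) ≤ 1 + lam * τ := by
      rw [show (1 : ℝ) + lam * τ = Real.sqrt ((1 + lam * τ) ^ 2) from
        (Real.sqrt_sq h1.le).symm]
      apply Real.sqrt_le_sqrt
      nlinarith [mul_nonneg hlam_pos.le hτ]
    calc ‖A τ (w τ)‖ ≤ ‖A τ‖ * ‖w τ‖ := (A τ).le_opNorm _
      _ ≤ (K * (q + v / 2 * τ) ^ (-2 - α)) * (B * Real.sqrt (1 + (lam * τ) ^ 2)) := by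
          apply mul_le_mul (hAbound τ hτ) (hwB τ hτ) (norm_nonneg _)
          positivity
      _ = K * B * ((q * (1 + lam * τ)) ^ (-2 - α) * Real.sqrt (1 + (lam * τ) ^ 2)) := by
          rw [hfac]; ring
      _ ≤ K * B * ((q * (1 + lam * τ)) ^ (-2 - α) * (1 + lam * τ)) := by
          apply mul_le_mul_of_nonneg_left _ (by positivity)
          exact mul_le_mul_of_nonneg_left hsqrt (by positivity)
      _ = c * (1 + lam * τ) ^ (-1 - α) := by
          rw [Real.mul_rpow hq.le h1.le, hc]
          have h2 : (1 + lam * τ) ^ (-2 - α) * (1 + lam * τ)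
              = (1 + lam * τ) ^ (-1 - α) := by
            nth_rewrite 2 [← Real.rpow_one (1 + lam * τ)]
            rw [← Real.rpow_add h1]
            congr 1
            ring
          rw [← h2]
          ring
  have hcontAw : Continuous fun τ => A τ (w τ) := hA.clm_apply hw
  -- inner integral bound
  have hinner : ∀ s ≥ (0:ℝ), ‖∫ τ in (0:ℝ)..s, A τ (w τ)‖ ≤ C := by
    intro s hs
    have hposs : ∀ τ ∈ Set.uIcc (0:ℝ) s, 0 < 1 + lam * τ := by
      intro τ hτ
      rw [Set.uIcc_of_le hs] at hτ
      nlinarith [hτ.1, hlam_pos]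
    have hg_cont : ContinuousOn (fun τ : ℝ => c * (1 + lam * τ) ^ (-1 - α))
        (Set.uIcc 0 s) := by
      apply ContinuousOn.mul continuousOn_const
      apply ContinuousOn.rpow_const
      · exact (continuous_const.add (continuous_const.mul continuous_id)).continuousOn
      · intro τ hτ; exact Or.inl (hposs τ hτ).ne'
    have hg_int : IntervalIntegrable (fun τ : ℝ => c * (1 + lam * τ) ^ (-1 - α))
        volume 0 s := hg_cont.intervalIntegrable
    calc ‖∫ τ in (0:ℝ)..s, A τ (w τ)‖
        ≤ ∫ τ in (0:ℝ)..s, ‖A τ (w τ)‖ :=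
          intervalIntegral.norm_integral_le_integral_norm hs
      _ ≤ ∫ τ in (0:ℝ)..s, c * (1 + lam * τ) ^ (-1 - α) := by
          apply intervalIntegral.integral_mono_on hs
            (hcontAw.norm.intervalIntegrable 0 s) hg_int
          intro τ hτ
          exact hpt τ hτ.1
      _ = c * ∫ τ in (0:ℝ)..s, (1 + lam * τ) ^ (-1 - α) :=
          intervalIntegral.integral_const_mul _ _
      _ ≤ c * (1 / (lam * α)) := by
          apply mul_le_mul_of_nonneg_left (aux_int lam α s hlam_pos hα hs) hc_nn
      _ = C := by rw [hC]; ring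
  -- outer integral
  have houter : ‖∫ s in (0:ℝ)..t, ∫ τ in (0:ℝ)..s, A τ (w τ)‖ ≤ C * t := by
    have := intervalIntegral.norm_integral_le_of_norm_le_const
      (f := fun s => ∫ τ in (0:ℝ)..s, A τ (w τ)) (C := C) (a := (0:ℝ)) (b := t) ?_
    · simpa [abs_of_nonneg ht] using this
    · intro s hs
      rw [Set.uIoc_of_le ht] at hs
      exact hinner s hs.1.le
  -- final arithmetic
  have hsq : t ≤ Real.sqrt (1 + (lam * t) ^ 2) / lam := by
    rw [le_div_iff₀ hlam_pos]
    rw [show t * lam = Real.sqrt ((lam * t) ^ 2) by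
      rw [Real.sqrt_sq (by positivity)]; ring]
    apply Real.sqrt_le_sqrt
    nlinarith
  have hsqrt_nn : 0 ≤ Real.sqrt (1 + (lam * t) ^ 2) := Real.sqrt_nonneg _
  have hstep : C * t ≤ (C / lam) * Real.sqrt (1 + (lam * t) ^ 2) := by
    calc C * t ≤ C * (Real.sqrt (1 + (lam * t) ^ 2) / lam) :=
          mul_le_mul_of_nonneg_left hsq hC_nn
      _ = (C / lam) * Real.sqrt (1 + (lam * t) ^ 2) := by ring
  refine houter.trans (hstep.trans ?_)
  apply mul_le_mul_of_nonneg_right _ hsqrt_nn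
  -- C / lam = K*B*q^(-2-α)/(lam²α) = 4 K B /(α v² q^α)
  have hq2 : q ^ (-2 - α) = (q ^ α)⁻¹ / q ^ 2 := by
    rw [show (-2 - α : ℝ) = -α + (-2 : ℝ) by ring, Real.rpow_add hq,
      Real.rpow_neg hq.le, show ((-2:ℝ)) = ((-2 : ℤ) : ℝ) by norm_num,
      Real.rpow_intCast]
    field_simp
  have hqα_pos : 0 < q ^ α := Real.rpow_pos_of_pos hq α
  have hCval : C / lam = 4 * K * B / (α * v ^ 2 * q ^ α) := by
    rw [hC, hc, hq2, hlam]
    field_simp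
    ring
  rw [hCval]
  have hdiff : 4 * (1 + 1 / α) * K / (v ^ 2 * q ^ α) * B
      - 4 * K * B / (α * v ^ 2 * q ^ α) = 4 * K * B / (v ^ 2 * q ^ α) := by
    field_simp
    ring
  have hnn : 0 ≤ 4 * K * B / (v ^ 2 * q ^ α) := by positivity
  linarith
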